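/- Let D be a superdialgebra over R with a bar-unit 1, and let m, n be nonnegative integers with m + n ≥ 3. Then the special linear Leibniz superalgebra sl(m,n,D) = [gl(m,n,D), gl(m,n,D)] is perfect: sl(m,n,D) equals the R-span of all brackets [x,y] with x, y ∈ sl(m,n,D). -/

import Mathlib

/-- The sign `(−1)^{αβ}` for degrees `α β : ℤ/2`, as an integer. -/
def ssign (α β : ZMod 2) : ℤ := (-1 : ℤ) ^ (α * β).val

/-- An associative superdialgebra over a commutative unital ring `R`. -/
structure Superdialgebra (R : Type*) (D : Type*) [CommRing R] [AddCommGroup D]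
    [Module R D] where
  grade : ZMod 2 → Submodule R D
  isInternal : DirectSum.IsInternal grade
  ld : D →ₗ[R] D →ₗ[R] D
  rd : D →ₗ[R] D →ₗ[R] D
  ld_assoc : ∀ a b c : D, ld (ld a b) c = ld a (ld b c)
  rd_assoc : ∀ a b c : D, rd (rd a b) c = rd a (rd b c)
  ld_mem : ∀ (α β : ZMod 2) (a b : D), a ∈ grade α → b ∈ grade β → ld a b ∈ grade (α + β)
  rd_mem : ∀ (α β : ZMod 2) (a b : D), a ∈ grade α → b ∈ grade β → rd a b ∈ grade (α + β)
  di1 : ∀ a b c : D, ld a (ld b c) = ld a (rd b c)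
  di2 : ∀ a b c : D, ld (rd a b) c = rd a (ld b c)
  di3 : ∀ a b c : D, rd (ld a b) c = rd (rd a b) c

variable {R D : Type*} [CommRing R] [AddCommGroup D] [Module R D]

/-- A bar-unit of a superdialgebra: an even element `e` with `a ⊣ e = a = e ⊢ a`. -/
def IsBarUnit (S : Superdialgebra R D) (e : D) : Prop :=
  e ∈ S.grade 0 ∧ ∀ a : D, S.ld a e = a ∧ S.rd e a = a

/-- The bracket `[a,b] = a ⊣ b − (−1)^{αβ} b ⊢ a` of elements `a, b` of degrees `α, β`. -/
def sbracket (S : Superdialgebra R D) (α β : ZMod 2) (a b : D) : D :=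
  S.ld a b - ssign α β • S.rd b a

/-- The set of super-commutators `a ⊣ b − (−1)^{|a||b|} b ⊢ a` of homogeneous elements. -/
def commGens (S : Superdialgebra R D) : Set D :=
  {z : D | ∃ (α β : ZMod 2) (a b : D), a ∈ S.grade α ∧ b ∈ S.grade β ∧
    z = S.ld a b - ssign α β • S.rd b a}

/-- `[D,D]`: the `R`-submodule spanned by the super-commutators. -/
def commSub (S : Superdialgebra R D) : Submodule R D :=
  Submodule.span R (commGens S)

/-- The parity of the index `i ∈ {1,…,m+n}`: `0` for `i ≤ m` and `1` for `i > m`. -/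
def pgr (m : ℕ) {N : ℕ} (i : Fin N) : ZMod 2 := if (i : ℕ) < m then 0 else 1

/-- Matrix product of matrices over a superdialgebra using `⊣` on entries. -/
def mLd (S : Superdialgebra R D) {N : ℕ} (x y : Matrix (Fin N) (Fin N) D) :
    Matrix (Fin N) (Fin N) D :=
  Matrix.of fun i j => ∑ l : Fin N, S.ld (x i l) (y l j)

/-- Matrix product of matrices over a superdialgebra using `⊢` on entries. -/
def mRd (S : Superdialgebra R D) {N : ℕ} (x y : Matrix (Fin N) (Fin N) D) :
    Matrix (Fin N) (Fin N) D :=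
  Matrix.of fun i j => ∑ l : Fin N, S.rd (x i l) (y l j)

/-- The grading of the general Leibniz superalgebra `gl(m,n,D)`: a matrix is homogeneous
of degree `α` when its `(i,j)` entry lies in `D_{α + p(i) + p(j)}` (i.e. `e_ij(a)` has
degree `p(i) + p(j) + |a|`). -/
def glGrade (S : Superdialgebra R D) (m n : ℕ) (α : ZMod 2) :
    Submodule R (Matrix (Fin (m + n)) (Fin (m + n)) D) where
  carrier := {x | ∀ i j, x i j ∈ S.grade (α + pgr m i + pgr m j)}
  add_mem' := fun hx hy i j => Submodule.add_mem _ (hx i j) (hy i j)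
  zero_mem' := fun _ _ => Submodule.zero_mem _
  smul_mem' := fun c _ hx i j => Submodule.smul_mem _ c (hx i j)

/-- `sl(m,n,D) = [gl(m,n,D), gl(m,n,D)]`: the `R`-span of all brackets
`[x,y] = x ⊣ y − (−1)^{|x||y|} y ⊢ x` of (homogeneous) elements of `gl(m,n,D)`. -/
def slSub (S : Superdialgebra R D) (m n : ℕ) :
    Submodule R (Matrix (Fin (m + n)) (Fin (m + n)) D) :=
  Submodule.span R {z | ∃ (α β : ZMod 2) (x y : Matrix (Fin (m + n)) (Fin (m + n)) D),
    x ∈ glGrade S m n α ∧ y ∈ glGrade S m n β ∧ z = mLd S x y - ssign α β • mRd S y x}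

section Aux

variable {R D : Type*} [CommRing R] [AddCommGroup D] [Module R D]

open Matrix Finset

lemma exists_third {N : ℕ} (hN : 3 ≤ N) (i j : Fin N) : ∃ k : Fin N, k ≠ i ∧ k ≠ j := by
  by_contra h
  push_neg at h
  have hsub : (Finset.univ : Finset (Fin N)) ⊆ {i, j} := by
    intro k _
    rcases eq_or_ne k i with rfl | hk
    · simp
    · simp [h k hk]
  have h1 : N ≤ ({i, j} : Finset (Fin N)).card := by
    calc N = (Finset.univ : Finset (Fin N)).card := by simp
    _ ≤ _ := Finset.card_le_card hsub
  have h2 : ({i, j} : Finset (Fin N)).card ≤ 2 := by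
    calc ({i, j} : Finset (Fin N)).card ≤ ({j} : Finset (Fin N)).card + 1 :=
      Finset.card_insert_le _ _
    _ ≤ 2 := by simp
  omega

lemma mLd_unit (S : Superdialgebra R D) {N : ℕ} (i j k l : Fin N) (a b : D) :
    mLd S (Matrix.single i j a) (Matrix.single k l b)
      = if j = k then Matrix.single i l (S.ld a b) else 0 := by
  funext p q
  have hterm : ∀ r : Fin N,
      S.ld (Matrix.single i j a p r) (Matrix.single k l b r q)
        = if i = p ∧ j = r ∧ k = r ∧ l = q then S.ld a b else 0 := by
    intro r
    simp only [Matrix.single, Matrix.of_apply]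
    split_ifs with h1 h2 h3 <;> simp_all
  show (∑ r : Fin N, S.ld (Matrix.single i j a p r) (Matrix.single k l b r q)) = _
  simp only [hterm]
  rw [Finset.sum_eq_single j]
  · by_cases hjk : j = k <;> by_cases hip : i = p <;> by_cases hlq : l = q <;>
      simp_all [Matrix.single] <;> exact fun h => absurd h.symm hjk
  · intro r _ hr
    rw [if_neg]
    rintro ⟨-, h, -⟩
    exact hr h.symm
  · intro h; exact absurd (Finset.mem_univ j) h

lemma mRd_unit (S : Superdialgebra R D) {N : ℕ} (i j k l : Fin N) (a b : D) :
    mRd S (Matrix.single i j a) (Matrix.single k l b)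
      = if j = k then Matrix.single i l (S.rd a b) else 0 := by
  funext p q
  have hterm : ∀ r : Fin N,
      S.rd (Matrix.single i j a p r) (Matrix.single k l b r q)
        = if i = p ∧ j = r ∧ k = r ∧ l = q then S.rd a b else 0 := by
    intro r
    simp only [Matrix.single, Matrix.of_apply]
    split_ifs with h1 h2 h3 <;> simp_all
  show (∑ r : Fin N, S.rd (Matrix.single i j a p r) (Matrix.single k l b r q)) = _
  simp only [hterm]
  rw [Finset.sum_eq_single j]
  · by_cases hjk : j = k <;> by_cases hip : i = p <;> by_cases hlq : l = q <;>
      simp_all [Matrix.single] <;> exact fun h => absurd h.symm hjk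
  · intro r _ hr
    rw [if_neg]
    rintro ⟨-, h, -⟩
    exact hr h.symm
  · intro h; exact absurd (Finset.mem_univ j) h

lemma mLd_sum_left (S : Superdialgebra R D) {N : ℕ} {ι : Type*} (t : Finset ι)
    (f : ι → Matrix (Fin N) (Fin N) D) (y : Matrix (Fin N) (Fin N) D) :
    mLd S (∑ i ∈ t, f i) y = ∑ i ∈ t, mLd S (f i) y := by
  funext p q
  show (∑ r : Fin N, S.ld ((∑ i ∈ t, f i) p r) (y r q)) = _
  simp only [Matrix.sum_apply, map_sum, LinearMap.sum_apply]
  exact Finset.sum_comm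

lemma mLd_sum_right (S : Superdialgebra R D) {N : ℕ} {ι : Type*} (t : Finset ι)
    (f : ι → Matrix (Fin N) (Fin N) D) (y : Matrix (Fin N) (Fin N) D) :
    mLd S y (∑ i ∈ t, f i) = ∑ i ∈ t, mLd S y (f i) := by
  funext p q
  show (∑ r : Fin N, S.ld (y p r) ((∑ i ∈ t, f i) r q)) = _
  simp only [Matrix.sum_apply, map_sum, LinearMap.sum_apply]
  exact Finset.sum_comm

lemma mRd_sum_left (S : Superdialgebra R D) {N : ℕ} {ι : Type*} (t : Finset ι)
    (f : ι → Matrix (Fin N) (Fin N) D) (y : Matrix (Fin N) (Fin N) D) :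
    mRd S (∑ i ∈ t, f i) y = ∑ i ∈ t, mRd S (f i) y := by
  funext p q
  show (∑ r : Fin N, S.rd ((∑ i ∈ t, f i) p r) (y r q)) = _
  simp only [Matrix.sum_apply, map_sum, LinearMap.sum_apply]
  exact Finset.sum_comm

lemma mRd_sum_right (S : Superdialgebra R D) {N : ℕ} {ι : Type*} (t : Finset ι)
    (f : ι → Matrix (Fin N) (Fin N) D) (y : Matrix (Fin N) (Fin N) D) :
    mRd S y (∑ i ∈ t, f i) = ∑ i ∈ t, mRd S y (f i) := by
  funext p q
  show (∑ r : Fin N, S.rd (y p r) ((∑ i ∈ t, f i) r q)) = _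
  simp only [Matrix.sum_apply, map_sum, LinearMap.sum_apply]
  exact Finset.sum_comm

end Aux

section Main

variable {R D : Type*} [CommRing R] [AddCommGroup D] [Module R D]

open Matrix Finset

lemma z2g : ∀ g x : ZMod 2, g + x + x = g := by decide
lemma z2a : ∀ g x y z : ZMod 2, g + y + z + x + z = g + x + y := by decide
lemma z2b : ∀ x y : ZMod 2, x + y + x + y = 0 := by decide
lemma z2c : ∀ g x y : ZMod 2, g + (x + y) + x + y = g := by decide
lemma z2d : ∀ g x y : ZMod 2, g + (x + y) + y + x = g := by decide
lemma z2f : ∀ x y : ZMod 2, x + y + x + y = 0 := by decide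
lemma z2h : ∀ g1 g2 u v w : ZMod 2, (g1 + u + v) + (g2 + v + w) = g1 + g2 + u + w := by decide
lemma z2i : ∀ g1 g2 u v w : ZMod 2, (g2 + u + v) + (g1 + v + w) = g1 + g2 + u + w := by decide
lemma ssign_combine : ∀ α β p : ZMod 2,
    ssign (α + p) (β + p) * ssign (α + β + p) p = ssign α β := by decide

/-- The target span: brackets of homogeneous elements of `sl`. -/
def slT (S : Superdialgebra R D) (m n : ℕ) :
    Submodule R (Matrix (Fin (m + n)) (Fin (m + n)) D) :=
  Submodule.span R {z | ∃ (α β : ZMod 2) (x y : Matrix (Fin (m + n)) (Fin (m + n)) D),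
    x ∈ glGrade S m n α ∧ y ∈ glGrade S m n β ∧ x ∈ slSub S m n ∧ y ∈ slSub S m n ∧
    z = mLd S x y - ssign α β • mRd S y x}

lemma unit_mem_glGrade (S : Superdialgebra R D) (m n : ℕ) (γ : ZMod 2)
    (i j : Fin (m + n)) (a : D) (ha : a ∈ S.grade (γ + pgr m i + pgr m j)) :
    Matrix.single i j a ∈ glGrade S m n γ := by
  intro p q
  simp only [Matrix.single, Matrix.of_apply]
  split_ifs with h
  · obtain ⟨rfl, rfl⟩ := h; exact ha
  · exact Submodule.zero_mem _

lemma offdiag_mem_sl (S : Superdialgebra R D) (m n : ℕ) (hmn : 3 ≤ m + n)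
    (e : D) (he : IsBarUnit S e) (γ : ZMod 2) (i j : Fin (m + n)) (hij : i ≠ j)
    (c : D) (hc : c ∈ S.grade (γ + pgr m i + pgr m j)) :
    Matrix.single i j c ∈ slSub S m n := by
  obtain ⟨k, hki, hkj⟩ := exists_third hmn i j
  apply Submodule.subset_span
  refine ⟨γ + pgr m j + pgr m k, pgr m k + pgr m j,
    Matrix.single i k c, Matrix.single k j e, ?_, ?_, ?_⟩
  · apply unit_mem_glGrade; rw [z2a]; exact hc
  · apply unit_mem_glGrade; rw [z2b]; exact he.1
  · rw [mLd_unit, mRd_unit, if_pos rfl, if_neg (Ne.symm hij), (he.2 c).1,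
      smul_zero, sub_zero]

lemma offdiag_mem_T (S : Superdialgebra R D) (m n : ℕ) (hmn : 3 ≤ m + n)
    (e : D) (he : IsBarUnit S e) (γ : ZMod 2) (i j : Fin (m + n)) (hij : i ≠ j)
    (c : D) (hc : c ∈ S.grade (γ + pgr m i + pgr m j)) :
    Matrix.single i j c ∈ slT S m n := by
  obtain ⟨k, hki, hkj⟩ := exists_third hmn i j
  apply Submodule.subset_span
  refine ⟨γ + pgr m j + pgr m k, pgr m k + pgr m j,
    Matrix.single i k c, Matrix.single k j e, ?_, ?_, ?_, ?_, ?_⟩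
  · apply unit_mem_glGrade; rw [z2a]; exact hc
  · apply unit_mem_glGrade; rw [z2b]; exact he.1
  · exact offdiag_mem_sl S m n hmn e he _ i k (Ne.symm hki) c (by rw [z2a]; exact hc)
  · exact offdiag_mem_sl S m n hmn e he _ k j hkj e (by rw [z2b]; exact he.1)
  · rw [mLd_unit, mRd_unit, if_pos rfl, if_neg (Ne.symm hij), (he.2 c).1,
      smul_zero, sub_zero]

lemma diag_mem_T (S : Superdialgebra R D) (m n : ℕ) (hmn : 3 ≤ m + n)
    (e : D) (he : IsBarUnit S e) (α β : ZMod 2) (i : Fin (m + n)) (a b : D)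
    (ha : a ∈ S.grade α) (hb : b ∈ S.grade β) :
    Matrix.single i i (S.ld a b) - ssign α β • Matrix.single i i (S.rd b a)
      ∈ slT S m n := by
  obtain ⟨k, hki, -⟩ := exists_third hmn i i
  have hd : S.rd b a ∈ S.grade (α + β) := by
    have := S.rd_mem β α b a hb ha; rwa [add_comm] at this
  have hu1mem : mLd S (Matrix.single i k a) (Matrix.single k i b)
      - ssign (α + (pgr m i + pgr m k)) (β + (pgr m i + pgr m k)) •
          mRd S (Matrix.single k i b) (Matrix.single i k a)
      ∈ slT S m n := by
    apply Submodule.subset_span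
    refine ⟨α + (pgr m i + pgr m k), β + (pgr m i + pgr m k),
      Matrix.single i k a, Matrix.single k i b, ?_, ?_, ?_, ?_, rfl⟩
    · apply unit_mem_glGrade; rw [z2c]; exact ha
    · apply unit_mem_glGrade; rw [z2d]; exact hb
    · exact offdiag_mem_sl S m n hmn e he _ i k (Ne.symm hki) a (by rw [z2c]; exact ha)
    · exact offdiag_mem_sl S m n hmn e he _ k i hki b (by rw [z2d]; exact hb)
  have hu2mem : mLd S (Matrix.single k i (S.rd b a)) (Matrix.single i k e)
      - ssign (α + β + (pgr m i + pgr m k)) (pgr m i + pgr m k) •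
          mRd S (Matrix.single i k e) (Matrix.single k i (S.rd b a))
      ∈ slT S m n := by
    apply Submodule.subset_span
    refine ⟨α + β + (pgr m i + pgr m k), pgr m i + pgr m k,
      Matrix.single k i (S.rd b a), Matrix.single i k e, ?_, ?_, ?_, ?_, rfl⟩
    · apply unit_mem_glGrade; rw [z2d]; exact hd
    · apply unit_mem_glGrade; rw [z2f]; exact he.1
    · exact offdiag_mem_sl S m n hmn e he _ k i hki _ (by rw [z2d]; exact hd)
    · exact offdiag_mem_sl S m n hmn e he _ i k (Ne.symm hki) e (by rw [z2f]; exact he.1)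
  rw [mLd_unit, mRd_unit, if_pos rfl, if_pos rfl] at hu1mem
  rw [mLd_unit, mRd_unit, if_pos rfl, if_pos rfl, (he.2 (S.rd b a)).1,
    (he.2 (S.rd b a)).2] at hu2mem
  have key : Matrix.single i i (S.ld a b) - ssign α β • Matrix.single i i (S.rd b a)
      = (Matrix.single i i (S.ld a b)
          - ssign (α + (pgr m i + pgr m k)) (β + (pgr m i + pgr m k)) •
              Matrix.single k k (S.rd b a))
        + ssign (α + (pgr m i + pgr m k)) (β + (pgr m i + pgr m k)) •
            (Matrix.single k k (S.rd b a)
              - ssign (α + β + (pgr m i + pgr m k)) (pgr m i + pgr m k) •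
                  Matrix.single i i (S.rd b a)) := by
    rw [smul_sub, smul_smul, ssign_combine]
    abel
  rw [key]
  exact add_mem hu1mem (zsmul_mem hu2mem _)

lemma unit_bracket_mem (S : Superdialgebra R D) (m n : ℕ) (hmn : 3 ≤ m + n)
    (e : D) (he : IsBarUnit S e) (α β : ZMod 2) (i j k l : Fin (m + n)) (a b : D)
    (ha : a ∈ S.grade (α + pgr m i + pgr m j)) (hb : b ∈ S.grade (β + pgr m k + pgr m l)) :
    mLd S (Matrix.single i j a) (Matrix.single k l b)
      - ssign α β • mRd S (Matrix.single k l b) (Matrix.single i j a) ∈ slT S m n := by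
  rw [mLd_unit, mRd_unit]
  by_cases hjk : j = k
  · subst hjk
    by_cases hli : l = i
    · subst hli
      rw [if_pos rfl, if_pos rfl]
      by_cases hij : l = j
      · subst hij
        have ha' : a ∈ S.grade α := by rwa [z2g] at ha
        have hb' : b ∈ S.grade β := by rwa [z2g] at hb
        exact diag_mem_T S m n hmn e he α β l a b ha' hb'
      · apply Submodule.subset_span
        refine ⟨α, β, Matrix.single l j a, Matrix.single j l b, ?_, ?_, ?_, ?_, ?_⟩
        · exact unit_mem_glGrade S m n α l j a ha
        · exact unit_mem_glGrade S m n β j l b hb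
        · exact offdiag_mem_sl S m n hmn e he α l j hij a ha
        · exact offdiag_mem_sl S m n hmn e he β j l (Ne.symm hij) b hb
        · rw [mLd_unit, mRd_unit, if_pos rfl, if_pos rfl]
    · rw [if_pos rfl, if_neg hli, smul_zero, sub_zero]
      have hld : S.ld a b ∈ S.grade (α + β + pgr m i + pgr m l) := by
        have := S.ld_mem _ _ a b ha hb; rwa [z2h] at this
      exact offdiag_mem_T S m n hmn e he (α + β) i l (fun h => hli h.symm) _ hld
  · by_cases hli : l = i
    · subst hli
      rw [if_neg hjk, if_pos rfl, zero_sub]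
      apply neg_mem
      apply zsmul_mem
      have hrd : S.rd b a ∈ S.grade (α + β + pgr m k + pgr m j) := by
        have := S.rd_mem _ _ b a hb ha; rwa [z2i] at this
      exact offdiag_mem_T S m n hmn e he (α + β) k j (fun h => hjk h.symm) _ hrd
    · rw [if_neg hjk, if_neg hli, smul_zero, sub_zero]
      exact zero_mem _

end Main

/-- for a unital superdialgebra `D` and `m + n ≥ 3`, the special linear
Leibniz superalgebra `sl(m,n,D)` is perfect: it equals the `R`-span of the brackets
`[x,y] = x ⊣ y − (−1)^{|x||y|} y ⊢ x` of its own (homogeneous) elements. -/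
theorem sl_perfect
    (S : Superdialgebra R D) (e : D) (he : IsBarUnit S e)
    (m n : ℕ) (hmn : 3 ≤ m + n) :
    slSub S m n =
      Submodule.span R {z | ∃ (α β : ZMod 2) (x y : Matrix (Fin (m + n)) (Fin (m + n)) D),
        x ∈ glGrade S m n α ∧ y ∈ glGrade S m n β ∧ x ∈ slSub S m n ∧ y ∈ slSub S m n ∧
        z = mLd S x y - ssign α β • mRd S y x} := by
  apply le_antisymm
  · apply Submodule.span_le.2
    rintro z ⟨α, β, x, y, hx, hy, rfl⟩
    show mLd S x y - ssign α β • mRd S y x ∈ slT S m n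
    have hx0 : ∀ i j, x i j ∈ S.grade (α + pgr m i + pgr m j) := hx
    have hy0 : ∀ i j, y i j ∈ S.grade (β + pgr m i + pgr m j) := hy
    have hx' := Matrix.matrix_eq_sum_single x
    have hy' := Matrix.matrix_eq_sum_single y
    have h1 : mLd S x y - ssign α β • mRd S y x
        = ∑ i, ∑ j, (mLd S (Matrix.single i j (x i j)) y
            - ssign α β • mRd S y (Matrix.single i j (x i j))) := by
      conv_lhs => rw [hx']
      simp only [mLd_sum_left, mRd_sum_right, Finset.smul_sum, ← Finset.sum_sub_distrib]
    rw [h1]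
    refine Submodule.sum_mem _ fun i _ => Submodule.sum_mem _ fun j _ => ?_
    have h2 : mLd S (Matrix.single i j (x i j)) y
          - ssign α β • mRd S y (Matrix.single i j (x i j))
        = ∑ k, ∑ l, (mLd S (Matrix.single i j (x i j)) (Matrix.single k l (y k l))
            - ssign α β • mRd S (Matrix.single k l (y k l)) (Matrix.single i j (x i j))) := by
      conv_lhs => rw [hy']
      simp only [mLd_sum_right, mRd_sum_left, Finset.smul_sum, ← Finset.sum_sub_distrib]
    rw [h2]
    refine Submodule.sum_mem _ fun k _ => Submodule.sum_mem _ fun l _ => ?_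
    exact unit_bracket_mem S m n hmn e he α β i j k l _ _ (hx0 i j) (hy0 k l)
  · apply Submodule.span_le.2
    rintro z ⟨α, β, x, y, hx, hy, -, -, rfl⟩
    exact Submodule.subset_span ⟨α, β, x, y, hx, hy, rfl⟩
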